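/- For distinct primes p and q, L_{pq} + 1 ≡ L_p + L_q (mod pq), where L is the Lucas sequence. -/
import Mathlib

def lucas : ℕ → ℕ
  | 0 => 2
  | 1 => 1
  | n + 2 => lucas (n + 1) + lucas n

open Matrix

noncomputable def lucasM (R : Type*) [CommRing R] : Matrix (Fin 2) (Fin 2) R :=
  !![1, 1; 1, 0]

lemma lucasM_sq (R : Type*) [CommRing R] : (lucasM R) ^ 2 = lucasM R + 1 := by
  simp only [lucasM, pow_two]
  ext i j
  fin_cases i <;> fin_cases j <;>
    simp [Matrix.mul_apply, Fin.sum_univ_succ, Matrix.one_apply]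

lemma trace_lucasM (R : Type*) [CommRing R] (n : ℕ) :
    Matrix.trace ((lucasM R) ^ n) = (lucas n : R) := by
  induction n using Nat.strong_induction_on with
  | _ n ih =>
    match n with
    | 0 => simp [lucas]
    | 1 => simp [lucas, lucasM, Matrix.trace, Fin.sum_univ_succ]
    | n + 2 =>
      have : (lucasM R) ^ (n + 2) = (lucasM R) ^ (n + 1) + (lucasM R) ^ n := by
        rw [pow_add, lucasM_sq, mul_add, mul_one, ← pow_succ]
      rw [this, Matrix.trace_add, ih (n+1) (by omega), ih n (by omega)]
      simp [lucas]

lemma lucas_mul_prime (n p : ℕ) (hp : p.Prime) : lucas (n * p) ≡ lucas n [MOD p] := by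
  haveI : Fact p.Prime := ⟨hp⟩
  rw [← ZMod.natCast_eq_natCast_iff]
  have h1 := trace_lucasM (ZMod p) (n * p)
  have h2 := trace_lucasM (ZMod p) n
  rw [pow_mul, ZMod.trace_pow_card, h2, ZMod.pow_card] at h1
  exact h1.symm

theorem lucas_pq (p q : ℕ) (hp : p.Prime) (hq : q.Prime) (hne : p ≠ q) :
    lucas (p * q) + 1 ≡ lucas p + lucas q [MOD p * q] := by
  have hcop : Nat.Coprime p q := (Nat.coprime_primes hp hq).mpr hne
  have hmp : lucas (p * q) + 1 ≡ lucas p + lucas q [MOD p] := by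
    have h1 : lucas (q * p) ≡ lucas q [MOD p] := lucas_mul_prime q p hp
    have h2 : lucas (1 * p) ≡ lucas 1 [MOD p] := lucas_mul_prime 1 p hp
    rw [one_mul] at h2
    calc lucas (p * q) + 1 ≡ lucas q + lucas p [MOD p] := by
          rw [mul_comm]; exact (h1.add (h2.symm)).symm.symm
      _ = lucas p + lucas q := by ring
  have hmq : lucas (p * q) + 1 ≡ lucas p + lucas q [MOD q] := by
    have h1 : lucas (p * q) ≡ lucas p [MOD q] := lucas_mul_prime p q hq
    have h2 : lucas (1 * q) ≡ lucas 1 [MOD q] := lucas_mul_prime 1 q hq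
    rw [one_mul] at h2
    exact h1.add h2.symm
  exact (Nat.modEq_and_modEq_iff_modEq_mul hcop).mp ⟨hmp, hmq⟩
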